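/- Let G be a graph with edge costs, let every habitat in H = {H₁,…,H_r} induce a cycle in G, and let B be the associated habitat (multi-)hypergraph with bijection f from E(G) to E(B). If M is a matching in B (pairwise disjoint hyperedges), then for F = E(G) \ f⁻¹(M) and every habitat H ∈ H, the graph G[F][H] is connected. -/

import Mathlib

open SimpleGraph
open scoped Classical

def edgesIn {V : Type*} (G : SimpleGraph V) (H : Set V) : Set (Sym2 V) :=
  {e | e ∈ G.edgeSet ∧ ∀ v ∈ e, v ∈ H}

def IsCycleGraph {W : Type*} (G : SimpleGraph W) : Prop :=
  G.Connected ∧ ∀ v, (G.neighborSet v).ncard = 2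

/-- The hyperedge of the habitat hypergraph `B` associated with an edge `e` of `G`:
the set of (indices of) habitats whose induced cycle contains `e`.  (Private auxiliary
vertices `b_e` for edges lying in a unique habitat never cause intersections, so the
matching condition of `B` is disjointness of these sets.) -/
def hyperOf {V : Type*} (G : SimpleGraph V) {r : ℕ} (Hs : Fin r → Set V)
    (e : Sym2 V) : Set (Fin r) :=
  {i | e ∈ edgesIn G (Hs i)}


lemma reach_transfer {W : Type*} {C C' : SimpleGraph W}
    (h : ∀ u v, C.Adj u v → C'.Reachable u v) {u v : W} (hr : C.Reachable u v) :
    C'.Reachable u v := by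
  obtain ⟨p⟩ := hr
  induction p with
  | nil => exact Reachable.refl _
  | cons h' _ ih => exact (h _ _ h').trans ih

lemma cycle_deleteEdge_connected {W : Type*} [Fintype W] (C : SimpleGraph W)
    (hconn : C.Connected) (hdeg : ∀ v, (C.neighborSet v).ncard = 2)
    {a b : W} (hab : C.Adj a b) : (C.deleteEdges {s(a, b)}).Connected := by
  classical
  set C' := C.deleteEdges {s(a, b)} with hC'
  have hadj : ∀ u v, C'.Adj u v ↔ C.Adj u v ∧ s(u, v) ≠ s(a, b) := by
    intro u v; simp [hC']
  have hne : a ≠ b := hab.ne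
  have hnb : ∀ v, v ≠ a → v ≠ b → C'.neighborSet v = C.neighborSet v := by
    intro v hva hvb
    ext w
    simp only [mem_neighborSet, hadj]
    refine ⟨fun h => h.1, fun h => ⟨h, fun hc => ?_⟩⟩
    rw [Sym2.eq_iff] at hc
    tauto
  have hnba : C'.neighborSet a = C.neighborSet a \ {b} := by
    ext w
    simp only [mem_neighborSet, hadj, Set.mem_diff, Set.mem_singleton_iff]
    constructor
    · rintro ⟨h1, h2⟩
      refine ⟨h1, fun hw => h2 ?_⟩
      rw [hw]
    · rintro ⟨h1, h2⟩
      refine ⟨h1, fun hc => ?_⟩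
      rw [Sym2.eq_iff] at hc
      tauto
  have hnbb : C'.neighborSet b = C.neighborSet b \ {a} := by
    ext w
    simp only [mem_neighborSet, hadj, Set.mem_diff, Set.mem_singleton_iff]
    constructor
    · rintro ⟨h1, h2⟩
      refine ⟨h1, fun hw => h2 ?_⟩
      rw [hw, Sym2.eq_swap]
    · rintro ⟨h1, h2⟩
      refine ⟨h1, fun hc => ?_⟩
      rw [Sym2.eq_iff] at hc
      tauto
  have hda : (C'.neighborSet a).ncard = 1 := by
    rw [hnba, Set.ncard_diff_singleton_of_mem (show b ∈ C.neighborSet a from hab), hdeg]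
  have hdb : (C'.neighborSet b).ncard = 1 := by
    rw [hnbb, Set.ncard_diff_singleton_of_mem (show a ∈ C.neighborSet b from hab.symm), hdeg]
  -- the connected component of `a` in `C'`
  set S : Set W := (C'.connectedComponentMk a).supp with hS
  have haS : a ∈ S := rfl
  have hSclosed : ∀ ⦃v w : W⦄, v ∈ S → C'.Adj v w → w ∈ S := by
    intro v w hv hvw
    rw [hS, ConnectedComponent.mem_supp_iff] at hv ⊢
    rw [← hv]
    exact ConnectedComponent.sound hvw.symm.reachable
  have hbS : b ∈ S := by
    by_contra hbS
    set D : SimpleGraph S := C'.induce S with hD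
    have hdegD : ∀ v : S, D.degree v = (C'.neighborSet ↑v).ncard := by
      intro v
      have himg : Subtype.val '' (D.neighborSet v) = C'.neighborSet ↑v := by
        ext w
        constructor
        · rintro ⟨w', hw', rfl⟩
          exact hw'
        · intro hw
          exact ⟨⟨w, hSclosed v.2 hw⟩, hw, rfl⟩
      rw [← himg, Set.ncard_image_of_injective _ Subtype.val_injective,
        ← Nat.card_coe_set_eq, Nat.card_eq_fintype_card, card_neighborSet_eq_degree]
    have heven := D.even_card_odd_degree_vertices
    have haT : (⟨a, haS⟩ : S) ∈ Finset.univ.filter (fun v : S => Odd (D.degree v)) := by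
      simp only [Finset.mem_filter, Finset.mem_univ, true_and, hdegD]
      rw [hda]; exact odd_one
    have hTsub : Finset.univ.filter (fun v : S => Odd (D.degree v)) ⊆ {(⟨a, haS⟩ : S)} := by
      intro v hv
      simp only [Finset.mem_filter, Finset.mem_univ, true_and, hdegD] at hv
      have hva : (v : W) = a := by
        by_contra hva
        by_cases hvb : (v : W) = b
        · exact hbS (hvb ▸ v.2)
        · rw [hnb _ hva hvb, hdeg] at hv
          exact (Nat.not_even_iff_odd.mpr hv) even_two
      simp only [Finset.mem_singleton]
      exact Subtype.ext hva
    have : Finset.univ.filter (fun v : S => Odd (D.degree v)) = {(⟨a, haS⟩ : S)} :=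
      Finset.Subset.antisymm hTsub (Finset.singleton_subset_iff.mpr haT)
    rw [this] at heven
    simp at heven
  have hreach : C'.Reachable a b := by
    rw [hS, ConnectedComponent.mem_supp_iff] at hbS
    exact (ConnectedComponent.exact hbS).symm
  rw [connected_iff]
  refine ⟨fun u v => ?_, hconn.nonempty⟩
  refine reach_transfer (fun x y hxy => ?_) (hconn.preconnected u v)
  by_cases he : s(x, y) = s(a, b)
  · rw [Sym2.eq_iff] at he
    rcases he with ⟨rfl, rfl⟩ | ⟨rfl, rfl⟩
    · exact hreach
    · exact hreach.symm
  · exact ((hadj x y).mpr ⟨hxy, he⟩).reachable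

/-- If every habitat induces a cycle and `M` is a matching in the habitat hypergraph
(pairwise disjoint hyperedges), then for `F = E(G) \ M` the graph `G[F][Hᵢ]`
is connected for every habitat. -/
theorem stmt6 {V : Type*} [Fintype V] (G : SimpleGraph V) (r : ℕ) (Hs : Fin r → Set V)
    (c : Sym2 V → ℕ)
    (hcyc : ∀ i, IsCycleGraph (G.induce (Hs i)))
    (M : Set (Sym2 V)) (hM : M ⊆ G.edgeSet)
    (hmatch : ∀ e ∈ M, ∀ e' ∈ M, e ≠ e' → Disjoint (hyperOf G Hs e) (hyperOf G Hs e')) :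
    ∀ i, ((SimpleGraph.fromEdgeSet (G.edgeSet \ M)).induce (Hs i)).Connected := by
  intro i
  obtain ⟨hconn, hdeg⟩ := hcyc i
  have hTadj : ∀ a b : ↥(Hs i),
      ((SimpleGraph.fromEdgeSet (G.edgeSet \ M)).induce (Hs i)).Adj a b ↔
        G.Adj ↑a ↑b ∧ s((a : V), (b : V)) ∉ M := by
    intro a b
    simp only [comap_adj, Function.Embedding.coe_subtype, fromEdgeSet_adj, Set.mem_diff,
      mem_edgeSet]
    constructor
    · rintro ⟨⟨h1, h2⟩, _⟩; exact ⟨h1, h2⟩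
    · rintro ⟨h1, h2⟩; exact ⟨⟨h1, h2⟩, h1.ne⟩
  by_cases hex : ∃ e ∈ M, e ∈ edgesIn G (Hs i)
  · obtain ⟨e0, he0M, he0in⟩ := hex
    obtain ⟨x, y, rfl⟩ : ∃ x y, e0 = s(x, y) := by
      induction e0 using Sym2.ind with | _ x y => exact ⟨x, y, rfl⟩
    obtain ⟨hGxy, hmem⟩ := he0in
    have hx : x ∈ Hs i := hmem x (Sym2.mem_mk_left x y)
    have hy : y ∈ Hs i := hmem y (Sym2.mem_mk_right x y)
    have hCadj : (G.induce (Hs i)).Adj ⟨x, hx⟩ ⟨y, hy⟩ := hGxy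
    have hkey := cycle_deleteEdge_connected (G.induce (Hs i)) hconn hdeg hCadj
    have heq : (SimpleGraph.fromEdgeSet (G.edgeSet \ M)).induce (Hs i) =
        (G.induce (Hs i)).deleteEdges {s((⟨x, hx⟩ : ↥(Hs i)), ⟨y, hy⟩)} := by
      ext a b
      rw [hTadj]
      simp only [deleteEdges_adj, comap_adj, Function.Embedding.coe_subtype,
        Set.mem_singleton_iff]
      constructor
      · rintro ⟨h1, h2⟩
        refine ⟨h1, fun hc => h2 ?_⟩
        have : s((a : V), (b : V)) = Sym2.map Subtype.val s(a, b) := rfl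
        rw [this, hc]
        exact he0M
      · rintro ⟨h1, h2⟩
        refine ⟨h1, fun hc => ?_⟩
        by_cases hne : s((a : V), (b : V)) = s(x, y)
        · apply h2
          apply Sym2.map.injective Subtype.val_injective
          exact hne
        · have hdisj := hmatch _ hc _ he0M hne
          have h1' : i ∈ hyperOf G Hs s((a : V), (b : V)) := by
            refine ⟨h1, ?_⟩
            intro v hv
            rw [Sym2.mem_iff] at hv
            rcases hv with rfl | rfl
            · exact a.2
            · exact b.2
          have h2' : i ∈ hyperOf G Hs s(x, y) := ⟨hGxy, hmem⟩
          exact hdisj.ne_of_mem h1' h2' rfl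
    rw [heq]
    exact hkey
  · push_neg at hex
    have heq : (SimpleGraph.fromEdgeSet (G.edgeSet \ M)).induce (Hs i) = G.induce (Hs i) := by
      ext a b
      rw [hTadj]
      simp only [comap_adj, Function.Embedding.coe_subtype]
      constructor
      · exact fun h => h.1
      · intro h
        refine ⟨h, fun hc => hex _ hc ⟨h, ?_⟩⟩
        intro v hv
        rw [Sym2.mem_iff] at hv
        rcases hv with rfl | rfl
        · exact a.2
        · exact b.2
    rw [heq]
    exact hconn
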